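/- Let a < b, β ∈ (0,1), and let f ∈ C¹([a,b]). Then for t ∈ (a,b], the Caputo derivative expressed via the generator form, D_{a+*}^β f(t) = (1/Γ(−β)) ∫_0^{t-a} (f(t−r) − f(t)) r^{−1−β} dr − (f(a) − f(t))/(Γ(1−β)(t−a)^β), coincides with the classical Caputo derivative (1/Γ(1−β)) ∫_a^t (t−s)^{−β} f'(s) ds. -/

import Mathlib

open MeasureTheory intervalIntegral

/-- For `f ∈ C¹([a,b])`, the generator form of the Caputo derivative of order
`β ∈ (0,1)` coincides with the classical Caputo derivative. -/
theorem caputo_generator_form_eq_classical (a b β : ℝ) (hab : a < b)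
    (hβ : β ∈ Set.Ioo (0 : ℝ) 1)
    (f f' : ℝ → ℝ) (hf : ∀ x ∈ Set.Icc a b, HasDerivAt f (f' x) x)
    (hf' : ContinuousOn f' (Set.Icc a b)) (t : ℝ) (ht : t ∈ Set.Ioc a b) :
    (1 / Real.Gamma (-β)) * (∫ r in (0:ℝ)..(t - a), (f (t - r) - f t) * r ^ (-1 - β)) -
      (f a - f t) / (Real.Gamma (1 - β) * (t - a) ^ β) =
    (1 / Real.Gamma (1 - β)) * ∫ s in a..t, (t - s) ^ (-β) * f' s := by
  obtain ⟨hβ0, hβ1⟩ := hβ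
  obtain ⟨hta, htb⟩ := ht
  set T := t - a with hTdef
  have hT0 : 0 < T := sub_pos.2 hta
  have hmem : ∀ r ∈ Set.Icc (0:ℝ) T, t - r ∈ Set.Icc a b := by
    intro r hr
    exact ⟨by simp only [hTdef] at hr; linarith [hr.2], by linarith [hr.1]⟩
  have htmem : t ∈ Set.Icc a b := ⟨hta.le, htb⟩
  obtain ⟨M, hM⟩ := (isCompact_Icc : IsCompact (Set.Icc a b)).exists_bound_of_continuousOn hf'
  have hM0 : 0 ≤ M := le_trans (norm_nonneg _) (hM t htmem)
  have hlip : ∀ x ∈ Set.Icc a b, ∀ y ∈ Set.Icc a b, |f y - f x| ≤ M * |y - x| := by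
    intro x hx y hy
    have := (convex_Icc a b).norm_image_sub_le_of_norm_hasDerivWithin_le
      (f' := f') (fun z hz => (hf z hz).hasDerivWithinAt) (fun z hz => hM z hz) hx hy
    simpa [Real.norm_eq_abs] using this
  have hfc : ContinuousOn f (Set.Icc a b) := fun x hx => (hf x hx).continuousAt.continuousWithinAt
  have hcsub : Continuous (fun r : ℝ => t - r) := continuous_const.sub continuous_id
  have hcf : ContinuousOn (fun r : ℝ => f (t - r)) (Set.Icc 0 T) :=
    hfc.comp hcsub.continuousOn hmem
  have hcf' : ContinuousOn (fun r : ℝ => f' (t - r)) (Set.Icc 0 T) :=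
    hf'.comp hcsub.continuousOn hmem
  have huIcc : Set.uIcc (0:ℝ) T = Set.Icc 0 T := Set.uIcc_of_le hT0.le
  -- integrability of the second piece
  have I2 : IntervalIntegrable (fun r : ℝ => f' (t - r) * r ^ (-β)) volume 0 T := by
    refine (intervalIntegral.intervalIntegrable_rpow' (by linarith)).continuousOn_mul ?_
    rw [huIcc]; exact hcf'
  -- integrability of the first piece
  have I1 : IntervalIntegrable (fun r : ℝ => (f (t - r) - f t) * r ^ (-1 - β)) volume 0 T := by
    apply IntervalIntegrable.mono_fun'
      (g := fun r : ℝ => M * r ^ (-β))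
      (((intervalIntegral.intervalIntegrable_rpow' (by linarith)).const_mul M))
    · apply AEStronglyMeasurable.mul
      · apply ContinuousOn.aestronglyMeasurable _ measurableSet_uIoc
        apply ((hcf.sub continuousOn_const)).mono
        rw [Set.uIoc_of_le hT0.le]; exact Set.Ioc_subset_Icc_self.trans (le_refl _)
      · exact (Measurable.aestronglyMeasurable (by measurability))
    · rw [Set.uIoc_of_le hT0.le]
      filter_upwards [ae_restrict_mem measurableSet_Ioc] with r hr
      have hr0 : 0 < r := hr.1
      have hb1 : |f (t - r) - f t| ≤ M * r := by
        have := hlip t htmem (t - r) (hmem r ⟨hr0.le, hr.2⟩)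
        simpa [abs_of_pos hr0] using this
      have hnn : 0 ≤ r ^ (-1 - β) := Real.rpow_nonneg hr0.le _
      calc ‖(f (t - r) - f t) * r ^ (-1 - β)‖
          = |f (t - r) - f t| * r ^ (-1 - β) := by
            rw [Real.norm_eq_abs, abs_mul, abs_of_nonneg hnn]
        _ ≤ (M * r) * r ^ (-1 - β) := by
            exact mul_le_mul_of_nonneg_right hb1 hnn
        _ = M * r ^ (-β) := by
            rw [mul_assoc]
            congr 1
            have hx := Real.rpow_add hr0 1 (-1 - β)
            rw [Real.rpow_one] at hx
            rw [← hx]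
            congr 1
            ring
  set h : ℝ → ℝ := fun r => (f (t - r) - f t) * r ^ (-1 - β) + f' (t - r) * r ^ (-β) / β
    with hhdef
  have Ih : IntervalIntegrable h volume 0 T := I1.add (I2.div_const β)
  set G : ℝ → ℝ := fun r => (f (t - r) - f t) * (-(r ^ (-β)) / β) with hGdef
  have hGderiv : ∀ r ∈ Set.Ioc (0:ℝ) T, HasDerivAt G (h r) r := by
    intro r hr
    have hr0 : 0 < r := hr.1
    have h1 : HasDerivAt (fun r : ℝ => f (t - r) - f t) (-f' (t - r)) r := by
      have hd := (hf (t - r) (hmem r ⟨hr0.le, hr.2⟩)).comp r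
        (((hasDerivAt_id r).const_sub t))
      simpa [mul_comm] using hd.sub_const (f t)
    have h2 : HasDerivAt (fun r : ℝ => -(r ^ (-β)) / β) (r ^ (-1 - β)) r := by
      have hd := ((Real.hasDerivAt_rpow_const (x := r) (p := -β) (Or.inl hr0.ne')).neg).div_const β
      refine hd.congr_deriv ?_
      rw [show -β - 1 = -1 - β by ring]
      field_simp
    have := h1.mul h2
    refine this.congr_deriv ?_
    simp only [hhdef]
    ring
  have key : ∀ ε ∈ Set.Ioc (0:ℝ) T, (∫ r in ε..T, h r) = G T - G ε := by
    intro ε hε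
    apply intervalIntegral.integral_eq_sub_of_hasDerivAt
    · intro r hr
      rw [Set.uIcc_of_le hε.2] at hr
      exact hGderiv r ⟨lt_of_lt_of_le hε.1 hr.1, hr.2⟩
    · apply Ih.mono_set'
      rw [Set.uIoc_of_le hε.2, Set.uIoc_of_le hT0.le]
      exact Set.Ioc_subset_Ioc hε.1.le le_rfl
  -- the limit filter
  haveI hne : (nhdsWithin (0:ℝ) (Set.Ioc 0 T)).NeBot := by
    apply mem_closure_iff_nhdsWithin_neBot.1
    rw [closure_Ioc hT0.ne]
    exact Set.left_mem_Icc.2 hT0.le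
  have hIntOn : IntegrableOn h (Set.uIcc 0 T) volume := by
    rw [huIcc]
    exact (intervalIntegrable_iff_integrableOn_Icc_of_le hT0.le).1 Ih
  have limit1 : Filter.Tendsto (fun ε => ∫ r in ε..T, h r) (nhdsWithin 0 (Set.Ioc 0 T))
      (nhds (∫ r in (0:ℝ)..T, h r)) := by
    have hcont := (intervalIntegral.continuousOn_primitive_interval_left hIntOn) 0
      (by rw [huIcc]; exact Set.left_mem_Icc.2 hT0.le)
    exact hcont.mono_left (nhdsWithin_mono _ (by rw [huIcc]; exact Set.Ioc_subset_Icc_self))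
  have hGlim : Filter.Tendsto G (nhdsWithin 0 (Set.Ioc 0 T)) (nhds 0) := by
    have hb : ∀ᶠ ε in nhdsWithin 0 (Set.Ioc 0 T), ‖G ε‖ ≤ (M / β) * ε ^ (1 - β) := by
      filter_upwards [self_mem_nhdsWithin] with ε hε
      have hε0 : 0 < ε := hε.1
      have hb1 : |f (t - ε) - f t| ≤ M * ε := by
        have := hlip t htmem (t - ε) (hmem ε ⟨hε0.le, hε.2⟩)
        simpa [abs_of_pos hε0] using this
      have hnn : 0 ≤ ε ^ (-β) := Real.rpow_nonneg hε0.le _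
      have : ‖G ε‖ = |f (t - ε) - f t| * (ε ^ (-β) / β) := by
        simp only [hGdef, Real.norm_eq_abs, abs_mul]
        congr 1
        rw [abs_div, abs_neg, abs_of_nonneg hnn, abs_of_pos hβ0]
      rw [this]
      calc |f (t - ε) - f t| * (ε ^ (-β) / β)
          ≤ (M * ε) * (ε ^ (-β) / β) := by
            apply mul_le_mul_of_nonneg_right hb1 (by positivity)
        _ = (M / β) * (ε * ε ^ (-β)) := by ring
        _ = (M / β) * ε ^ (1 - β) := by
            congr 1
            rw [show (1:ℝ) - β = 1 + (-β) by ring, Real.rpow_add hε0, Real.rpow_one]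
    have ht2 : Filter.Tendsto (fun ε : ℝ => (M / β) * ε ^ (1 - β))
        (nhdsWithin 0 (Set.Ioc 0 T)) (nhds 0) := by
      have hcc : Filter.Tendsto (fun ε : ℝ => ε ^ (1 - β)) (nhdsWithin 0 (Set.Ioc 0 T))
          (nhds ((0:ℝ) ^ (1 - β))) :=
        (Real.continuousAt_rpow_const 0 (1 - β)
          (Or.inr (by linarith))).continuousWithinAt.tendsto
      rw [Real.zero_rpow (by linarith : (1:ℝ) - β ≠ 0)] at hcc
      simpa using hcc.const_mul (M / β)
    exact squeeze_zero_norm' hb ht2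
  have limit2 : Filter.Tendsto (fun ε => G T - G ε) (nhdsWithin 0 (Set.Ioc 0 T))
      (nhds (G T)) := by
    simpa using (tendsto_const_nhds (x := G T)).sub hGlim
  have hmain : (∫ r in (0:ℝ)..T, h r) = G T := by
    apply tendsto_nhds_unique _ limit2
    apply limit1.congr'
    filter_upwards [self_mem_nhdsWithin] with ε hε
    exact (key ε hε)
  -- split the integral
  have hsplit : (∫ r in (0:ℝ)..T, h r)
      = (∫ r in (0:ℝ)..T, (f (t - r) - f t) * r ^ (-1 - β))
        + (∫ r in (0:ℝ)..T, f' (t - r) * r ^ (-β)) / β := by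
    rw [hhdef, intervalIntegral.integral_add I1 (I2.div_const β),
      intervalIntegral.integral_div]
  -- substitution
  have hsub : (∫ r in (0:ℝ)..T, f' (t - r) * r ^ (-β))
      = ∫ s in a..t, (t - s) ^ (-β) * f' s := by
    have hc := intervalIntegral.integral_comp_sub_left (a := (0:ℝ)) (b := T)
      (fun x => (t - x) ^ (-β) * f' x) t
    simp only [sub_sub_cancel, sub_zero] at hc
    rw [show t - T = a by rw [hTdef]; ring] at hc
    rw [← hc]
    congr 1
    ext r
    ring
  -- Gamma facts
  have hΓ1 : Real.Gamma (1 - β) = -β * Real.Gamma (-β) := by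
    have := Real.Gamma_add_one (s := -β) (neg_ne_zero.2 hβ0.ne')
    rw [show (1:ℝ) - β = -β + 1 by ring, this]
  have hΓne : Real.Gamma (-β) ≠ 0 := by
    apply Real.Gamma_ne_zero
    intro m
    rcases Nat.eq_zero_or_pos m with hm | hm
    · subst hm; simpa using hβ0.ne'
    · have h1 : (1:ℝ) ≤ m := by exact_mod_cast hm
      intro hcon
      have : β = m := by linarith [neg_injective hcon]
      linarith
  have hΓ1ne : Real.Gamma (1 - β) ≠ 0 := by
    rw [hΓ1]; exact mul_ne_zero (neg_ne_zero.2 hβ0.ne') hΓne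
  -- final algebra
  have hGT : G T = (f a - f t) * (-(T ^ (-β)) / β) := by
    simp only [hGdef]
    rw [show t - T = a by rw [hTdef]; ring]
  have hTpow : T ^ (-β) = (T ^ β)⁻¹ := Real.rpow_neg hT0.le β
  have hTβ : (0:ℝ) < T ^ β := Real.rpow_pos_of_pos hT0 β
  rw [hsplit, hsub, hGT] at hmain
  rw [hΓ1]
  rw [hTpow] at hmain
  set A := ∫ r in (0:ℝ)..T, (f (t - r) - f t) * r ^ (-1 - β) with hAdef
  set B := ∫ s in a..t, (t - s) ^ (-β) * f' s with hBdef
  have hβne : β ≠ 0 := hβ0.ne'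
  have hTβne : (T ^ β) ≠ 0 := hTβ.ne'
  have hA : A = (f a - f t) * (-(T ^ β)⁻¹ / β) - B / β := by linarith
  rw [hA]
  field_simp
  ring
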